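/- With the same setup, if μ̄ satisfies l*_B ≤ inf_{0≤λ≤B} L(μ̄,λ) + ε, R* ≤ l*_B, and R(μ) ≤ R_m for all μ, then C(μ̄) ≥ 1 − δ − (R_m − R* + ε)/B. -/
import Mathlib


/-- ε-optimality implies approximate constraint satisfaction. -/
theorem stmt_1 {M : Type*} [Nonempty M] (R C : M → ℝ) (δ B ε Rm : ℝ)
    (hδ : δ ∈ Set.Ioo (0 : ℝ) 1) (hB : 0 < B) (hε : 0 < ε)
    (L : M → ℝ → ℝ) (hL : ∀ μ lam, L μ lam = R μ + lam * (C μ - 1 + δ))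
    (Rstar lB : ℝ)
    (hRstar : Rstar = sSup (R '' {μ | C μ ≥ 1 - δ}))
    (hlB : lB = ⨆ μ, ⨅ lam : Set.Icc (0 : ℝ) B, L μ lam)
    (hRm : ∀ μ, R μ ≤ Rm)
    (μbar : M)
    (h1 : lB ≤ (⨅ lam : Set.Icc (0 : ℝ) B, L μbar lam) + ε)
    (h2 : Rstar ≤ lB) :
    C μbar ≥ 1 - δ - (Rm - Rstar + ε) / B := by
  have hc : C μbar - 1 + δ = C μbar - 1 + δ := rfl
  have hbdd : BddBelow (Set.range fun lam : Set.Icc (0 : ℝ) B => L μbar lam) := by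
    refine ⟨R μbar - B * |C μbar - 1 + δ|, ?_⟩
    rintro x ⟨⟨lam, hlam⟩, rfl⟩
    simp only [hL]
    have h1 : lam * (C μbar - 1 + δ) ≥ -(B * |C μbar - 1 + δ|) := by
      have : |lam * (C μbar - 1 + δ)| ≤ B * |C μbar - 1 + δ| := by
        rw [abs_mul]
        have : |lam| ≤ B := by
          rw [abs_le]; exact ⟨by linarith [hlam.1], hlam.2⟩
        exact mul_le_mul_of_nonneg_right this (abs_nonneg (C μbar - 1 + δ))
      linarith [neg_abs_le (lam * (C μbar - 1 + δ))]
    linarith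
  have hle : (⨅ lam : Set.Icc (0 : ℝ) B, L μbar lam) ≤ L μbar B :=
    ciInf_le hbdd ⟨B, ⟨le_of_lt hB, le_refl B⟩⟩
  have key : Rstar ≤ Rm + B * (C μbar - 1 + δ) + ε := by
    have := hRm μbar
    have hLB := hL μbar B
    linarith
  have hd : (Rm - Rstar + ε) / B * B = Rm - Rstar + ε := by
    field_simp
  nlinarith [key, hd]
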